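/- arXiv:2302.09652 — 6 statements merged into one kernel-verified Lean document; each statement's English description precedes it below -/
import Mathlib

section
/- Let V be a finite vertex type, G a simple graph on V with a symmetric nonnegative edge-weight function W : V → V → ℝ, k ≥ 1 a natural number, and H ≤ G a subgraph. Assume that for every pair of vertices u, v with G.Adj u v but ¬H.Adj u v there exists a walk from u to v in H that has at most 2k−1 edges and every edge {x,y} of which satisfies W x y ≤ 2·(W u v). Then H is a (4k−2)-spanner of G in the following sense: for all vertices u, v and every walk p from u to v in G there exists a walk q from u to v in H such that the weight of q is at most (4k−2) times the weight of p. (This is the stretch-factor guarantee of Theorem 1 for the greedy dyadic-scale spanner algorithm.) -/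
open SimpleGraph

/-- The weight of a walk: the sum of `W` over its edges (traversed darts). -/
def walkWeight {V : Type*} (W : V → V → ℝ) {G : SimpleGraph V} {u v : V}
    (p : G.Walk u v) : ℝ :=
  (p.darts.map fun d => W d.toProd.1 d.toProd.2).sum

lemma walkWeight_nonneg {V : Type*} {W : V → V → ℝ} (hnonneg : ∀ u v : V, 0 ≤ W u v)
    {G : SimpleGraph V} {u v : V} (p : G.Walk u v) : 0 ≤ walkWeight W p := by
  apply List.sum_nonneg
  intro x hx
  simp only [List.mem_map] at hx
  obtain ⟨d, _, rfl⟩ := hx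
  exact hnonneg _ _

lemma walkWeight_append {V : Type*} (W : V → V → ℝ) {G : SimpleGraph V} {u v w : V}
    (p : G.Walk u v) (q : G.Walk v w) :
    walkWeight W (p.append q) = walkWeight W p + walkWeight W q := by
  simp [walkWeight, SimpleGraph.Walk.darts_append]

lemma walkWeight_cons {V : Type*} (W : V → V → ℝ) {G : SimpleGraph V} {u v w : V}
    (h : G.Adj u v) (p : G.Walk v w) :
    walkWeight W (SimpleGraph.Walk.cons h p) = W u v + walkWeight W p := by
  simp [walkWeight]

/-- Stretch-factor guarantee of the greedy dyadic-scale `(4k-2)`-spanner (Theorem 1). -/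
theorem weighted_spanner_stretch {V : Type*} [Fintype V]
    (G H : SimpleGraph V) (W : V → V → ℝ)
    (hsymm : ∀ u v : V, W u v = W v u) (hnonneg : ∀ u v : V, 0 ≤ W u v)
    (k : ℕ) (hk : 1 ≤ k) (hHG : H ≤ G)
    (hyp : ∀ u v : V, G.Adj u v → ¬ H.Adj u v →
      ∃ p : H.Walk u v, p.length ≤ 2 * k - 1 ∧
        ∀ x y : V, s(x, y) ∈ p.edges → W x y ≤ 2 * W u v) :
    ∀ u v : V, ∀ p : G.Walk u v, ∃ q : H.Walk u v,
      walkWeight W q ≤ ((4 * k - 2 : ℕ) : ℝ) * walkWeight W p := by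
  have hC : (2 : ℝ) ≤ ((4 * k - 2 : ℕ) : ℝ) := by
    have : (2 : ℕ) ≤ 4 * k - 2 := by omega
    exact_mod_cast this
  have hC0 : (0 : ℝ) ≤ ((4 * k - 2 : ℕ) : ℝ) := by linarith
  -- for each G-edge, an H-walk with bounded weight
  have key : ∀ u v : V, G.Adj u v → ∃ q : H.Walk u v,
      walkWeight W q ≤ ((4 * k - 2 : ℕ) : ℝ) * W u v := by
    intro u v huv
    by_cases hH : H.Adj u v
    · refine ⟨SimpleGraph.Walk.cons hH SimpleGraph.Walk.nil, ?_⟩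
      have := hnonneg u v
      simp only [walkWeight, SimpleGraph.Walk.darts_cons, SimpleGraph.Walk.darts_nil,
        List.map_cons, List.map_nil, List.sum_cons, List.sum_nil, add_zero]
      nlinarith
    · obtain ⟨q, hlen, hbound⟩ := hyp u v huv hH
      refine ⟨q, ?_⟩
      have hsum : walkWeight W q ≤ (q.darts.map fun d => W d.toProd.1 d.toProd.2).length • (2 * W u v) := by
        apply List.sum_le_card_nsmul
        intro x hx
        simp only [List.mem_map] at hx
        obtain ⟨d, hd, rfl⟩ := hx
        apply hbound
        have : d.edge ∈ q.edges := List.mem_map_of_mem hd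
        simpa [SimpleGraph.Dart.edge] using this
      rw [List.length_map, SimpleGraph.Walk.length_darts] at hsum
      have h2 : (q.length : ℝ) * (2 * W u v) ≤ ((2 * k - 1 : ℕ) : ℝ) * (2 * W u v) := by
        apply mul_le_mul_of_nonneg_right
        · exact_mod_cast hlen
        · nlinarith [hnonneg u v]
      have h3 : ((2 * k - 1 : ℕ) : ℝ) * 2 = ((4 * k - 2 : ℕ) : ℝ) := by
        have : (2 * k - 1) * 2 = 4 * k - 2 := by omega
        exact_mod_cast this
      calc walkWeight W q ≤ (q.length : ℝ) * (2 * W u v) := by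
            simpa [nsmul_eq_mul] using hsum
        _ ≤ ((2 * k - 1 : ℕ) : ℝ) * (2 * W u v) := h2
        _ = ((4 * k - 2 : ℕ) : ℝ) * W u v := by rw [← h3]; ring
  intro u v p
  induction p with
  | nil =>
      refine ⟨SimpleGraph.Walk.nil, ?_⟩
      simp [walkWeight]
  | cons h p ih =>
      obtain ⟨q1, hq1⟩ := key _ _ h
      obtain ⟨q2, hq2⟩ := ih
      refine ⟨q1.append q2, ?_⟩
      rw [walkWeight_append, walkWeight_cons, mul_add]
      exact add_le_add hq1 hq2
end

section
/- Conductance preservation under spectral sparsification (Lemma 3): let V be a finite vertex type, and let w_G and w_H be weight functions on V with Laplacians L_G and L_H. Let 0 ≤ ε ≤ 1/3 and suppose that for every x : V → ℝ, (1−ε)·(x ⬝ᵥ L_G *ᵥ x) ≤ x ⬝ᵥ L_H *ᵥ x ≤ (1+ε)·(x ⬝ᵥ L_G *ᵥ x). Then for every subset S ⊆ V with vol_G(S) > 0: vol_H(S) > 0 and (1/2)·φ_G(S) ≤ φ_H(S) ≤ 2·φ_G(S), where for a weight function w, vol_w(S) = Σ_{u ∈ S} Σ_{v ∈ V} w u v,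 cut_w(S) = Σ_{u ∈ S} Σ_{v ∉ S} w u v, and the conductance is φ_w(S) = cut_w(S) / vol_w(S). -/
open Matrix

/-- The Laplacian matrix of a weight function `w : V → V → ℝ`. -/
noncomputable def weightLaplacian {V : Type*} [Fintype V] [DecidableEq V]
    (w : V → V → ℝ) : Matrix V V ℝ :=
  Matrix.diagonal (fun v => ∑ u, w v u) - Matrix.of w

/-- The volume of a vertex set `S` under the weight function `w`. -/
noncomputable def volume {V : Type*} [Fintype V] (w : V → V → ℝ) (S : Finset V) : ℝ :=
  ∑ u ∈ S, ∑ v, w u v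

/-- The cut weight of a vertex set `S` under the weight function `w`. -/
noncomputable def cutWeight {V : Type*} [Fintype V] [DecidableEq V]
    (w : V → V → ℝ) (S : Finset V) : ℝ :=
  ∑ u ∈ S, ∑ v ∈ Sᶜ, w u v

/-- The conductance of a vertex set `S` under the weight function `w`. -/
noncomputable def conductance {V : Type*} [Fintype V] [DecidableEq V]
    (w : V → V → ℝ) (S : Finset V) : ℝ :=
  cutWeight w S / volume w S

/-- Quadratic form of the Laplacian at the indicator vector of `S` equals the cut weight. -/
lemma quad_ind {V : Type*} [Fintype V] [DecidableEq V] (w : V → V → ℝ) (S : Finset V) :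
    (fun u => if u ∈ S then (1:ℝ) else 0) ⬝ᵥ weightLaplacian w *ᵥ
      (fun u => if u ∈ S then (1:ℝ) else 0) = cutWeight w S := by
  classical
  simp only [weightLaplacian, cutWeight, dotProduct, mulVec, Matrix.sub_apply, diagonal_apply, of_apply,
    sub_mul, mul_ite, mul_one, mul_zero, ite_mul, one_mul, zero_mul, Finset.sum_sub_distrib,
    Finset.sum_ite_eq', Finset.mem_univ, if_true]
  rw [Finset.sum_ite_mem, Finset.univ_inter]
  refine Finset.sum_congr rfl fun i hi => ?_
  rw [Finset.sum_ite_mem, Finset.univ_inter, Finset.sum_sub_distrib,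
    Finset.sum_ite_eq S i (fun _ => ∑ u : V, w i u), if_pos hi]
  linarith [Finset.sum_add_sum_compl S (w i)]

/-- Volume as a sum of singleton cut weights (for weight functions with zero diagonal). -/
lemma vol_eq_sum_cut {V : Type*} [Fintype V] [DecidableEq V] (w : V → V → ℝ)
    (hdiag : ∀ v : V, w v v = 0) (S : Finset V) :
    volume w S = ∑ v ∈ S, cutWeight w {v} := by
  classical
  unfold volume cutWeight
  refine Finset.sum_congr rfl fun v _ => ?_
  rw [Finset.sum_singleton]
  have := Finset.sum_add_sum_compl ({v} : Finset V) (w v)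
  rw [Finset.sum_singleton, hdiag v] at this
  linarith

/-- Conductance preservation under spectral sparsification (Lemma 3). -/
theorem conductance_preservation {V : Type*} [Fintype V] [DecidableEq V]
    (wG wH : V → V → ℝ)
    (hGsymm : ∀ u v : V, wG u v = wG v u) (hGnonneg : ∀ u v : V, 0 ≤ wG u v)
    (hGdiag : ∀ v : V, wG v v = 0)
    (hHsymm : ∀ u v : V, wH u v = wH v u) (hHnonneg : ∀ u v : V, 0 ≤ wH u v)
    (hHdiag : ∀ v : V, wH v v = 0)
    (ε : ℝ) (hε0 : 0 ≤ ε) (hε1 : ε ≤ 1 / 3)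
    (happrox : ∀ x : V → ℝ,
      (1 - ε) * (x ⬝ᵥ weightLaplacian wG *ᵥ x) ≤ x ⬝ᵥ weightLaplacian wH *ᵥ x ∧
      x ⬝ᵥ weightLaplacian wH *ᵥ x ≤ (1 + ε) * (x ⬝ᵥ weightLaplacian wG *ᵥ x)) :
    ∀ S : Finset V, 0 < volume wG S →
      0 < volume wH S ∧
      (1 / 2) * conductance wG S ≤ conductance wH S ∧
      conductance wH S ≤ 2 * conductance wG S := by
  intro S hS
  classical
  -- cut comparisons from the indicator of S
  have hcut := happrox (fun u => if u ∈ S then (1:ℝ) else 0)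
  rw [quad_ind wG S, quad_ind wH S] at hcut
  -- volume comparisons from indicators of singletons
  have hvol_ge : (1 - ε) * volume wG S ≤ volume wH S := by
    rw [vol_eq_sum_cut wG hGdiag, vol_eq_sum_cut wH hHdiag, Finset.mul_sum]
    refine Finset.sum_le_sum fun v _ => ?_
    have h := happrox (fun u => if u ∈ ({v} : Finset V) then (1:ℝ) else 0)
    rw [quad_ind wG {v}, quad_ind wH {v}] at h
    exact h.1
  have hvol_le : volume wH S ≤ (1 + ε) * volume wG S := by
    rw [vol_eq_sum_cut wG hGdiag, vol_eq_sum_cut wH hHdiag, Finset.mul_sum]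
    refine Finset.sum_le_sum fun v _ => ?_
    have h := happrox (fun u => if u ∈ ({v} : Finset V) then (1:ℝ) else 0)
    rw [quad_ind wG {v}, quad_ind wH {v}] at h
    exact h.2
  have h1ε : (0:ℝ) < 1 - ε := by linarith
  have h1ε' : (0:ℝ) < 1 + ε := by linarith
  have hcutG0 : 0 ≤ cutWeight wG S :=
    Finset.sum_nonneg fun u _ => Finset.sum_nonneg fun v _ => hGnonneg u v
  have hcutH0 : 0 ≤ cutWeight wH S :=
    Finset.sum_nonneg fun u _ => Finset.sum_nonneg fun v _ => hHnonneg u v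
  have hvolH : 0 < volume wH S := lt_of_lt_of_le (mul_pos h1ε hS) hvol_ge
  have hφG0 : 0 ≤ cutWeight wG S / volume wG S := div_nonneg hcutG0 hS.le
  refine ⟨hvolH, ?_, ?_⟩
  · -- lower bound
    unfold conductance
    have step1 : (1/2 : ℝ) * (cutWeight wG S / volume wG S) ≤
        ((1 - ε) / (1 + ε)) * (cutWeight wG S / volume wG S) := by
      refine mul_le_mul_of_nonneg_right ?_ hφG0
      rw [le_div_iff₀ h1ε']
      linarith
    have step2 : ((1 - ε) / (1 + ε)) * (cutWeight wG S / volume wG S) ≤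
        cutWeight wH S / volume wH S := by
      rw [← mul_div_mul_comm]
      exact div_le_div₀ hcutH0 hcut.1 hvolH hvol_le
    linarith
  · -- upper bound
    unfold conductance
    have step1 : cutWeight wH S / volume wH S ≤
        ((1 + ε) / (1 - ε)) * (cutWeight wG S / volume wG S) := by
      rw [← mul_div_mul_comm]
      exact div_le_div₀ (by positivity) hcut.2 (mul_pos h1ε hS) hvol_ge
    have step2 : ((1 + ε) / (1 - ε)) * (cutWeight wG S / volume wG S) ≤
        2 * (cutWeight wG S / volume wG S) := by
      refine mul_le_mul_of_nonneg_right ?_ hφG0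
      rw [div_le_iff₀ h1ε]
      linarith
    linarith
end

section
/- Spanner projection under graph blow-up (the core claim in the proof of Theorem 6): let V and I be types, k ≥ 1 a natural number, G a simple graph on V, and G' a simple graph on V × I such that (i) for all u, v with G.Adj u v there exist a, b : I with G'.Adj (u,a) (v,b), and (ii) for all u, v : V and a, b : I, G'.Adj (u,a) (v,b) implies u = v or G.Adj u v. Let H' ≤ G' be a subgraph with H'.edist x y ≤ (2k−1) · (G'.edist x y) for all x, y : V × I, and define the simple graph H on V by H.Adj u v ↔ (u ≠ v ∧ ∃ a b : I, H'.Adj (u,a) (v,b)). Then H ≤ G, and for all u, v : V, H.edist u v ≤ (2k−1) · (G.edist u v) in ℕ∞. -/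
open SimpleGraph

private lemma proj_walk {V I : Type*} {H' : SimpleGraph (V × I)} {H : SimpleGraph V}
    (hH : ∀ u v : V, H.Adj u v ↔ (u ≠ v ∧ ∃ a b : I, H'.Adj (u, a) (v, b)))
    {x y : V × I} (p : H'.Walk x y) : H.edist x.1 y.1 ≤ p.length := by
  induction p with
  | nil => simp [edist_self]
  | @cons a b c hab q ih =>
    by_cases h : a.1 = b.1
    · rw [h]
      exact le_trans ih (by rw [Walk.length_cons]; exact_mod_cast Nat.le_succ _)
    · have hadj : H.Adj a.1 b.1 := (hH a.1 b.1).2 ⟨h, a.2, b.2, by simpa using hab⟩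
      calc H.edist a.1 c.1 ≤ H.edist a.1 b.1 + H.edist b.1 c.1 := SimpleGraph.edist_triangle
        _ ≤ 1 + q.length := add_le_add (by simpa using edist_le hadj.toWalk) ih
        _ = (q.cons hab).length := by simp [Walk.length_cons, add_comm]

/-- Spanner projection under graph blow-up (core claim in the proof of Theorem 6). -/
theorem spanner_projection_blowup {V I : Type*} (k : ℕ) (hk : 1 ≤ k)
    (G : SimpleGraph V) (G' : SimpleGraph (V × I))
    (h1 : ∀ u v : V, G.Adj u v → ∃ a b : I, G'.Adj (u, a) (v, b))
    (h2 : ∀ (u v : V) (a b : I), G'.Adj (u, a) (v, b) → u = v ∨ G.Adj u v)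
    (H' : SimpleGraph (V × I)) (hH'G' : H' ≤ G')
    (hH'span : ∀ x y : V × I,
      H'.edist x y ≤ ((2 * k - 1 : ℕ) : ℕ∞) * G'.edist x y)
    (H : SimpleGraph V)
    (hH : ∀ u v : V, H.Adj u v ↔ (u ≠ v ∧ ∃ a b : I, H'.Adj (u, a) (v, b))) :
    H ≤ G ∧ ∀ u v : V, H.edist u v ≤ ((2 * k - 1 : ℕ) : ℕ∞) * G.edist u v := by
  have hstep : ∀ u v : V, G.Adj u v → H.edist u v ≤ ((2 * k - 1 : ℕ) : ℕ∞) := by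
    intro u v huv
    obtain ⟨a, b, hab⟩ := h1 u v huv
    have h1' : G'.edist (u, a) (v, b) ≤ 1 := by simpa using edist_le hab.toWalk
    have := hH'span (u, a) (v, b)
    have hHle : H.edist u v ≤ H'.edist (u, a) (v, b) := by
      rcases eq_or_ne (H'.edist (u, a) (v, b)) ⊤ with h | h
      · simp [h]
      · obtain ⟨p, hp⟩ := exists_walk_of_edist_ne_top h
        simpa [hp] using proj_walk hH p
    calc H.edist u v ≤ ((2 * k - 1 : ℕ) : ℕ∞) * G'.edist (u, a) (v, b) := hHle.trans this
      _ ≤ ((2 * k - 1 : ℕ) : ℕ∞) * 1 := by exact mul_le_mul_right h1' _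
      _ = _ := mul_one _
  have hwalk : ∀ (u v : V) (p : G.Walk u v),
      H.edist u v ≤ ((2 * k - 1 : ℕ) : ℕ∞) * p.length := by
    intro u v p
    induction p with
    | nil => simp [SimpleGraph.edist_self]
    | @cons a b c hab q ih =>
      calc H.edist a c ≤ H.edist a b + H.edist b c := SimpleGraph.edist_triangle
        _ ≤ ((2 * k - 1 : ℕ) : ℕ∞) * 1 + ((2 * k - 1 : ℕ) : ℕ∞) * q.length := by
            exact add_le_add (by simpa using hstep a b hab) ih
        _ = ((2 * k - 1 : ℕ) : ℕ∞) * (q.cons hab).length := by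
            rw [← mul_add, Walk.length_cons]
            push_cast
            ring_nf
  constructor
  · intro u v huv
    obtain ⟨hne, a, b, hab⟩ := (hH u v).1 huv
    exact ((h2 u v a b (hH'G' hab)).resolve_left hne)
  · intro u v
    rcases eq_or_ne (G.edist u v) ⊤ with h | h
    · rw [h, ENat.mul_top]
      · exact le_top
      · have : (2 * k - 1 : ℕ) ≠ 0 := by omega
        exact_mod_cast this
    · obtain ⟨p, hp⟩ := exists_walk_of_edist_ne_top h
      simpa [hp] using hwalk u v p
end

section
/- Additive surplus 2 of the distributed +2-spanner construction (the deterministic core of Theorem 10): let G be a simple graph on a finite vertex type V, H ≤ G a subgraph, D a natural number, and R a set of vertices such that: (i) for every vertex v with G.degree v ≤ D, every edge of G incident to v is an edge of H; (ii) every vertex v with G.degree v > D has a neighbor in R (some x ∈ R with G.Adj x v); and (iii) for every x ∈ R and every vertex w, H.edist x w = G.edist x w. Then for all vertices u, v: H.edist u v ≤ G.edist u v + 2 in ℕ∞. -/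
open SimpleGraph

private lemma walk_bound {V : Type*} [Fintype V] [DecidableEq V]
    (G H : SimpleGraph V) [DecidableRel G.Adj] (hHG : H ≤ G)
    (D : ℕ) (R : Set V)
    (h1 : ∀ v : V, G.degree v ≤ D → ∀ u : V, G.Adj u v → H.Adj u v)
    (h2 : ∀ v : V, D < G.degree v → ∃ x ∈ R, G.Adj x v)
    (h3 : ∀ x ∈ R, ∀ w : V, H.edist x w = G.edist x w) :
    ∀ u v : V, ∀ p : G.Walk u v, H.edist u v ≤ (p.length : ℕ∞) + 2 := by
  intro u v p
  induction p with
  | nil => simp [SimpleGraph.edist_self]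
  | @cons a b c hab q ih =>
    by_cases hd : G.degree a ≤ D
    · have hH : H.Adj a b := (h1 a hd b hab.symm).symm
      calc H.edist a c ≤ H.edist a b + H.edist b c := SimpleGraph.edist_triangle
        _ ≤ 1 + ((q.length : ℕ∞) + 2) :=
            add_le_add (le_of_eq (edist_eq_one_iff_adj.mpr hH)) ih
        _ = ((q.cons hab).length : ℕ∞) + 2 := by
            push_cast [SimpleGraph.Walk.length_cons]; ring
    · obtain ⟨x, hxR, hxa⟩ := h2 a (lt_of_not_ge hd)
      have h1x : G.edist a x ≤ 1 := le_of_eq (edist_eq_one_iff_adj.mpr hxa.symm)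
      have h1x' : G.edist x a ≤ 1 := le_of_eq (edist_eq_one_iff_adj.mpr hxa)
      calc H.edist a c ≤ H.edist a x + H.edist x c := SimpleGraph.edist_triangle
        _ = G.edist a x + G.edist x c := by
            rw [SimpleGraph.edist_comm (G := H), h3 x hxR a,
              SimpleGraph.edist_comm (G := G), h3 x hxR c]
        _ ≤ G.edist a x + (G.edist x a + G.edist a c) := by
            gcongr; exact SimpleGraph.edist_triangle
        _ ≤ 1 + (1 + ((q.cons hab).length : ℕ∞)) := by
            gcongr
            exact SimpleGraph.edist_le _
        _ = ((q.cons hab).length : ℕ∞) + 2 := by ring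

/-- Additive surplus 2 of the distributed +2-spanner construction
(the deterministic core of Theorem 10). -/
theorem plus_two_spanner {V : Type*} [Fintype V] [DecidableEq V]
    (G H : SimpleGraph V) [DecidableRel G.Adj] (hHG : H ≤ G)
    (D : ℕ) (R : Set V)
    (h1 : ∀ v : V, G.degree v ≤ D → ∀ u : V, G.Adj u v → H.Adj u v)
    (h2 : ∀ v : V, D < G.degree v → ∃ x ∈ R, G.Adj x v)
    (h3 : ∀ x ∈ R, ∀ w : V, H.edist x w = G.edist x w) :
    ∀ u v : V, H.edist u v ≤ G.edist u v + 2 := by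
  intro u v
  by_cases htop : G.edist u v = ⊤
  · simp [htop]
  · obtain ⟨p, hp⟩ := SimpleGraph.exists_walk_of_edist_ne_top htop
    rw [← hp]
    exact walk_bound G H hHG D R h1 h2 h3 u v p
end

section
/- Sampling lemma (Lemma 11): let U be a nonempty finite set, t ≥ 1 a natural number, C a finite collection of subsets of U each of cardinality at least t, δ ∈ (0,1) a real number, and m a natural number with m ≥ (|U| / t) · Real.log (|C| / δ). Then the number of functions f : Fin m → U for which some set c ∈ C is disjoint from the range of f is at most δ · |U|^m. (Equivalently: if one draws m independent uniform samples from U, then with probability at least 1 − δ every set in C contains at least one sample.) -/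
/-- Sampling lemma (Lemma 11): if one draws `m ≥ (|U|/t)·log(|C|/δ)` independent uniform
samples from `U`, then the fraction of sample sequences missing some set of `C` entirely
is at most `δ`. -/
theorem sampling_lemma {U : Type*} [Fintype U] [Nonempty U] [DecidableEq U]
    (t : ℕ) (ht : 1 ≤ t) (C : Finset (Finset U))
    (hC : ∀ c ∈ C, t ≤ c.card)
    (δ : ℝ) (hδ0 : 0 < δ) (hδ1 : δ < 1)
    (m : ℕ)
    (hm : ((Fintype.card U : ℝ) / t) * Real.log (C.card / δ) ≤ m) :
    (({f : Fin m → U | ∃ c ∈ C, ∀ i : Fin m, f i ∉ c} : Set (Fin m → U)).ncard : ℝ) ≤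
      δ * (Fintype.card U : ℝ) ^ m := by
  classical
  set n := Fintype.card U with hn
  have hn0 : 0 < n := Fintype.card_pos
  rcases C.eq_empty_or_nonempty with rfl | hCne
  · have hempty : ({f : Fin m → U | ∃ c ∈ (∅ : Finset (Finset U)), ∀ i : Fin m, f i ∉ c}
        : Set (Fin m → U)) = ∅ := by
      ext f; simp
    rw [hempty, Set.ncard_empty]
    norm_num
    positivity
  -- C nonempty
  obtain ⟨c₀, hc₀⟩ := hCne
  have htn : t ≤ n := le_trans (hC c₀ hc₀) (Finset.card_le_univ c₀)
  -- counting part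
  set F : Finset (Fin m → U) :=
    Finset.univ.filter (fun f : Fin m → U => ∃ c ∈ C, ∀ i : Fin m, f i ∉ c) with hF
  have hSF : ({f : Fin m → U | ∃ c ∈ C, ∀ i : Fin m, f i ∉ c} : Set (Fin m → U)) = ↑F := by
    ext f; simp [hF]
  rw [hSF, Set.ncard_coe_finset]
  have hsub : F ⊆ C.biUnion (fun c => Fintype.piFinset (fun _ : Fin m => cᶜ)) := by
    intro f hf
    simp only [hF, Finset.mem_filter] at hf
    obtain ⟨-, c, hc, hfc⟩ := hf
    refine Finset.mem_biUnion.2 ⟨c, hc, ?_⟩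
    rw [Fintype.mem_piFinset]
    intro i
    simpa using hfc i
  have hcard : F.card ≤ C.card * (n - t) ^ m := by
    calc F.card ≤ (C.biUnion (fun c => Fintype.piFinset (fun _ : Fin m => cᶜ))).card :=
          Finset.card_le_card hsub
      _ ≤ ∑ c ∈ C, (Fintype.piFinset (fun _ : Fin m => cᶜ)).card :=
          Finset.card_biUnion_le
      _ ≤ ∑ c ∈ C, (n - t) ^ m := by
          refine Finset.sum_le_sum fun c hc => ?_
          rw [Fintype.card_piFinset]
          simp only [Finset.card_compl]
          rw [Finset.prod_const, Finset.card_univ, Fintype.card_fin]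
          exact Nat.pow_le_pow_left (Nat.sub_le_sub_left (hC c hc) n) m
      _ = C.card * (n - t) ^ m := by rw [Finset.sum_const, smul_eq_mul]
  have hcardR : (F.card : ℝ) ≤ (C.card : ℝ) * ((n : ℝ) - t) ^ m := by
    have := (Nat.cast_le (α := ℝ)).2 hcard
    push_cast [Nat.cast_sub htn] at this
    exact this
  refine hcardR.trans ?_
  -- analytic part
  set K : ℝ := (C.card : ℝ) with hK
  have hK1 : (1 : ℝ) ≤ K := by
    have h : 1 ≤ C.card := Finset.card_pos.2 ⟨c₀, hc₀⟩
    rw [hK]; exact_mod_cast h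
  have hnR : (0 : ℝ) < n := by exact_mod_cast hn0
  have htR : (0 : ℝ) < t := by exact_mod_cast ht
  have htnR : (t : ℝ) ≤ n := by exact_mod_cast htn
  have hKδ : 0 < K / δ := div_pos (lt_of_lt_of_le one_pos hK1) hδ0
  -- from hm : (n/t) * log(K/δ) ≤ m, get log(K/δ) ≤ t/n * m
  have hlog : Real.log (K / δ) ≤ (t : ℝ) / n * m := by
    have h1 : (t : ℝ) / n * ((n : ℝ) / t * Real.log (K / δ)) ≤ (t : ℝ) / n * m :=
      mul_le_mul_of_nonneg_left hm (le_of_lt (div_pos htR hnR))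
    have h2 : (t : ℝ) / n * ((n : ℝ) / t * Real.log (K / δ)) = Real.log (K / δ) := by
      field_simp
    linarith [h1, h2.symm.le]
  have hKexp : K ≤ δ * Real.exp ((t : ℝ) / n * m) := by
    have := Real.exp_le_exp.2 hlog
    rw [Real.exp_log hKδ] at this
    rw [div_le_iff₀ hδ0] at this
    linarith
  have hbase : (n : ℝ) - t = n * (1 - t / n) := by field_simp
  have hbase0 : 0 ≤ 1 - (t : ℝ) / n := by
    have : (t : ℝ) / n ≤ 1 := (div_le_one hnR).2 htnR
    linarith
  have hexp : (1 : ℝ) - t / n ≤ Real.exp (-(t / n)) := by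
    have := Real.add_one_le_exp (-(t / n : ℝ))
    linarith
  have hpow : ((n : ℝ) - t) ^ m ≤ (n : ℝ) ^ m * Real.exp (-((t : ℝ) / n * m)) := by
    rw [hbase, mul_pow]
    refine mul_le_mul_of_nonneg_left ?_ (by positivity)
    calc (1 - (t : ℝ) / n) ^ m ≤ Real.exp (-(t / n : ℝ)) ^ m :=
          pow_le_pow_left₀ hbase0 hexp m
      _ = Real.exp (-((t : ℝ) / n * m)) := by
          rw [← Real.exp_nat_mul]; ring_nf
  calc K * ((n : ℝ) - t) ^ m
      ≤ K * ((n : ℝ) ^ m * Real.exp (-((t : ℝ) / n * m))) :=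
        mul_le_mul_of_nonneg_left hpow (le_trans zero_le_one hK1)
    _ = (K * Real.exp (-((t : ℝ) / n * m))) * (n : ℝ) ^ m := by ring
    _ ≤ δ * (n : ℝ) ^ m := by
        refine mul_le_mul_of_nonneg_right ?_ (by positivity)
        have hepos : 0 < Real.exp ((t : ℝ) / n * m) := Real.exp_pos _
        rw [Real.exp_neg]
        rw [mul_inv_le_iff₀ hepos]
        linarith
end

section
/- Size bound for graphs of large girth (used in the proofs of Theorems 1 and 2): let k ≥ 1 be a natural number and G a simple graph on a finite vertex type with n vertices such that G.girth > 2k (G contains no cycle with at most 2k edges). Then the number of edges of G satisfies (G.edgeFinset.card : ℝ) ≤ (n : ℝ)^(1 + 1/k) + n, where the exponent 1 + 1/k is a real number. -/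
open SimpleGraph

-- Paths of length 1 are unique
lemma path_length_one_eq {V : Type*} {G : SimpleGraph V} {a b : V}
    (p q : G.Walk a b) (hp : p.length = 1) (hq : q.length = 1) : p = q := by
  cases p with
  | nil => simp at hp
  | cons h p' =>
    cases q with
    | nil => simp at hq
    | cons h2 q' =>
      simp only [Walk.length_cons, Nat.add_left_inj] at hp hq
      cases p' with
      | nil =>
        cases q' with
        | nil => rfl
        | cons _ _ => simp at hq
      | cons _ _ => simp at hp

-- a path from a to b containing the edge s(a,b) has length 1
lemma length_one_of_edge_mem {V : Type*} {G : SimpleGraph V} {a b : V}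
    {p : G.Walk a b} (hp : p.IsPath) (he : s(a, b) ∈ p.edges) : p.length = 1 := by
  cases p with
  | nil => simp at he
  | cons h p' =>
    rw [Walk.cons_isPath_iff] at hp
    rename_i x
    rw [Walk.edges_cons, List.mem_cons] at he
    rcases he with he | he
    · have hxb : x = b := by
        rw [Sym2.eq_iff] at he
        rcases he with ⟨-, rfl⟩ | ⟨h1, h2⟩
        · rfl
        · exact absurd h1 (G.ne_of_adj h)
      subst hxb
      have : p' = Walk.nil := (Walk.isPath_iff_eq_nil).mp hp.1
      subst this
      rfl
    · exact absurd (Walk.fst_mem_support_of_mem_edges p' he) hp.2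

lemma exists_cycle_of_two_paths_aux {V : Type*} {G : SimpleGraph V} [DecidableEq V] :
    ∀ (n : ℕ) {a b : V} (p q : G.Walk a b), p.IsPath → q.IsPath → p ≠ q →
      p.length + q.length ≤ n →
      ∃ (c : V) (w : G.Walk c c), w.IsCycle ∧ w.length ≤ p.length + q.length := by
  intro n
  induction n with
  | zero =>
    intro a b p q hp hq hne hlen
    have hp0 : p.length = 0 := by omega
    have hq0 : q.length = 0 := by omega
    have hab : a = b := Walk.eq_of_length_eq_zero hp0
    subst hab
    rw [Walk.length_eq_zero_iff, Walk.nil_iff_eq_nil] at hp0 hq0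
    exact absurd (hp0.trans hq0.symm) hne
  | succ n ih =>
    intro a b p q hp hq hne hlen
    by_cases hab : a = b
    · subst hab
      rw [Walk.isPath_iff_eq_nil] at hp hq
      exact absurd (hp.trans hq.symm) hne
    by_cases hz : ∃ z, z ∈ p.support ∧ z ∈ q.support ∧ z ≠ a ∧ z ≠ b
    · obtain ⟨z, hzp, hzq, hza, hzb⟩ := hz
      have hlp : (p.takeUntil z hzp).length + (p.dropUntil z hzp).length = p.length := by
        rw [← Walk.length_append, Walk.take_spec]
      have hlq : (q.takeUntil z hzq).length + (q.dropUntil z hzq).length = q.length := by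
        rw [← Walk.length_append, Walk.take_spec]
      have h1 : 1 ≤ (p.takeUntil z hzp).length := by
        rcases Nat.eq_zero_or_pos (p.takeUntil z hzp).length with h | h
        · exact absurd (Walk.eq_of_length_eq_zero h).symm hza
        · exact h
      have h2 : 1 ≤ (q.takeUntil z hzq).length := by
        rcases Nat.eq_zero_or_pos (q.takeUntil z hzq).length with h | h
        · exact absurd (Walk.eq_of_length_eq_zero h).symm hza
        · exact h
      have h3 : 1 ≤ (p.dropUntil z hzp).length := by
        rcases Nat.eq_zero_or_pos (p.dropUntil z hzp).length with h | h
        · exact absurd (Walk.eq_of_length_eq_zero h) hzb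
        · exact h
      have h4 : 1 ≤ (q.dropUntil z hzq).length := by
        rcases Nat.eq_zero_or_pos (q.dropUntil z hzq).length with h | h
        · exact absurd (Walk.eq_of_length_eq_zero h) hzb
        · exact h
      by_cases hT : p.takeUntil z hzp = q.takeUntil z hzq
      · have hD : p.dropUntil z hzp ≠ q.dropUntil z hzq := by
          intro hD
          apply hne
          rw [← Walk.take_spec p hzp, ← Walk.take_spec q hzq, hT, hD]
        obtain ⟨c, w, hw, hwl⟩ := ih (p.dropUntil z hzp) (q.dropUntil z hzq)
          (hp.dropUntil hzp) (hq.dropUntil hzq) hD (by omega)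
        exact ⟨c, w, hw, by omega⟩
      · obtain ⟨c, w, hw, hwl⟩ := ih (p.takeUntil z hzp) (q.takeUntil z hzq)
          (hp.takeUntil hzp) (hq.takeUntil hzq) hT (by omega)
        exact ⟨c, w, hw, by omega⟩
    · -- internally disjoint case
      push_neg at hz
      have hsupp : ∀ z, z ∈ p.support → z ∈ q.support → z = a ∨ z = b := by
        intro z h1 h2
        by_contra hcon
        push_neg at hcon
        exact hcon.2 (hz z h1 h2 hcon.1)
      have hpnodup := hp.support_nodup
      have hqrev : q.reverse.IsPath := hq.reverse
      have hqrevnodup := hqrev.support_nodup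
      -- tail membership facts
      have hmem_tail_p : ∀ z, z ∈ p.support.tail → z ∈ p.support ∧ z ≠ a := by
        intro z hzt
        refine ⟨List.mem_of_mem_tail hzt, ?_⟩
        intro hza
        subst hza
        rw [p.support_eq_cons] at hpnodup
        exact (List.nodup_cons.mp hpnodup).1 hzt
      have hmem_tail_q : ∀ z, z ∈ q.reverse.support.tail → z ∈ q.support ∧ z ≠ b := by
        intro z hzt
        have hzs : z ∈ q.reverse.support := List.mem_of_mem_tail hzt
        rw [Walk.support_reverse, List.mem_reverse] at hzs
        refine ⟨hzs, ?_⟩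
        intro hzb
        subst hzb
        rw [q.reverse.support_eq_cons] at hqrevnodup
        exact (List.nodup_cons.mp hqrevnodup).1 hzt
      have hplen : 1 ≤ p.length := by
        rcases Nat.eq_zero_or_pos p.length with h | h
        · exact absurd (Walk.eq_of_length_eq_zero h) hab
        · exact h
      refine ⟨a, p.append q.reverse, ?_, by rw [Walk.length_append, Walk.length_reverse]⟩
      rw [Walk.isCycle_def]
      refine ⟨?_, ?_, ?_⟩
      · -- IsTrail
        rw [Walk.isTrail_def, Walk.edges_append]
        rw [List.nodup_append]
        refine ⟨hp.isTrail.edges_nodup, hqrev.isTrail.edges_nodup, ?_⟩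
        intro e hep e' heq hee'
        subst hee'
        rw [Walk.edges_reverse, List.mem_reverse] at heq
        induction e with
        | h x y =>
          have hadj : G.Adj x y := (G.mem_edgeSet).mp (p.edges_subset_edgeSet hep)
          have hx : x = a ∨ x = b :=
            hsupp x (Walk.fst_mem_support_of_mem_edges p hep)
              (Walk.fst_mem_support_of_mem_edges q heq)
          have hy : y = a ∨ y = b :=
            hsupp y (Walk.snd_mem_support_of_mem_edges p hep)
              (Walk.snd_mem_support_of_mem_edges q heq)
          have hexy : s(x, y) = s(a, b) := by
            rcases hx with rfl | rfl <;> rcases hy with rfl | rfl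
            · exact absurd rfl hadj.ne
            · rfl
            · exact Sym2.eq_swap
            · exact absurd rfl hadj.ne
          rw [hexy] at hep heq
          have hp1 := length_one_of_edge_mem hp hep
          have hq1 := length_one_of_edge_mem hq heq
          exact hne (path_length_one_eq p q hp1 hq1)
      · -- not nil
        intro hnil
        have := congrArg Walk.length hnil
        rw [Walk.length_append, Walk.length_nil] at this
        omega
      · -- support tail nodup
        rw [Walk.tail_support_append, List.nodup_append]
        refine ⟨hpnodup.tail, hqrevnodup.tail, ?_⟩
        intro z hzp' z' hzq' hzz'
        subst hzz'
        obtain ⟨hz1, hz2⟩ := hmem_tail_p z hzp'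
        obtain ⟨hz3, hz4⟩ := hmem_tail_q z hzq'
        rcases hsupp z hz1 hz3 with rfl | rfl
        · exact hz2 rfl
        · exact hz4 rfl

lemma exists_cycle_of_two_paths {V : Type*} {G : SimpleGraph V} {a b : V}
    (p q : G.Walk a b) (hp : p.IsPath) (hq : q.IsPath) (hne : p ≠ q) :
    ∃ (c : V) (w : G.Walk c c), w.IsCycle ∧ w.length ≤ p.length + q.length := by
  classical
  exact exists_cycle_of_two_paths_aux (p.length + q.length) p q hp hq hne le_rfl

section Helpers
variable {V : Type*} {G : SimpleGraph V}

lemma short_paths_unique {k : ℕ}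
    (hg : ∀ (c : V) (w : G.Walk c c), w.IsCycle → 2 * k < w.length)
    {a b : V} {p q : G.Walk a b} (hp : p.IsPath) (hq : q.IsPath)
    (hpl : p.length ≤ k) (hql : q.length ≤ k) : p = q := by
  by_contra hne
  obtain ⟨c, w, hw, hwl⟩ := exists_cycle_of_two_paths p q hp hq hne
  have := hg c w hw
  omega

lemma exists_shortest_path {r x : V} {j : ℕ} (h : G.edist r x = (j : ℕ∞)) :
    ∃ P : G.Walk r x, P.IsPath ∧ P.length = j := by
  classical
  obtain ⟨p, hp⟩ := exists_walk_of_edist_eq_coe h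
  refine ⟨p.bypass, p.bypass_isPath, ?_⟩
  have h1 : p.bypass.length ≤ j := hp ▸ p.length_bypass_le
  have h2 : G.edist r x ≤ p.bypass.length := Walk.edist_le _
  rw [h] at h2
  have h2' : j ≤ p.bypass.length := by exact_mod_cast h2
  omega

lemma edist_le_of_mem_support [DecidableEq V] {r x u : V} (P : G.Walk r x)
    (hu : u ∈ P.support) : G.edist r u ≤ (P.length : ℕ∞) := by
  calc G.edist r u ≤ ((P.takeUntil u hu).length : ℕ∞) := Walk.edist_le _
    _ ≤ (P.length : ℕ∞) := by exact_mod_cast Walk.length_takeUntil_le P hu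

lemma eq_end_of_edist_ge [DecidableEq V] {r x u : V} (P : G.Walk r x)
    (hu : u ∈ P.support) (hge : (P.length : ℕ∞) ≤ G.edist r u) : u = x := by
  have h1 : G.edist r u ≤ ((P.takeUntil u hu).length : ℕ∞) := Walk.edist_le _
  have h2 := Walk.length_takeUntil_le P hu
  have h3 : (P.length : ℕ∞) ≤ ((P.takeUntil u hu).length : ℕ∞) := le_trans hge h1
  have h4 : P.length ≤ (P.takeUntil u hu).length := by exact_mod_cast h3
  have h5 : (P.takeUntil u hu).length = P.length := le_antisymm h2 h4
  have h6 : (P.takeUntil u hu).length + (P.dropUntil u hu).length = P.length := by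
    rw [← Walk.length_append, Walk.take_spec]
  exact Walk.eq_of_length_eq_zero (p := P.dropUntil u hu) (by omega)

lemma exists_path_extend {r x w : V} (P : G.Walk r x) (hP : P.IsPath)
    (ha : G.Adj x w) (hw : w ∉ P.support) :
    ∃ Q : G.Walk r w, Q.IsPath ∧ Q.length = P.length + 1 ∧
      (∀ z, z ∈ Q.support ↔ z = w ∨ z ∈ P.support) := by
  refine ⟨(Walk.cons ha.symm P.reverse).reverse, ?_, ?_, ?_⟩
  · apply Walk.IsPath.reverse
    rw [Walk.cons_isPath_iff]
    refine ⟨hP.reverse, ?_⟩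
    rwa [Walk.support_reverse, List.mem_reverse]
  · rw [Walk.length_reverse, Walk.length_cons, Walk.length_reverse]
  · intro z
    rw [Walk.support_reverse, List.mem_reverse, Walk.support_cons, List.mem_cons,
      Walk.support_reverse, List.mem_reverse]

end Helpers

section Moore
variable {W : Type*} [Fintype W] [DecidableEq W] (H : SimpleGraph W) [DecidableRel H.Adj]

lemma moore_bound (k d : ℕ) (hk : 1 ≤ k)
    (hg : ∀ (c : W) (w : H.Walk c c), w.IsCycle → 2 * k < w.length)
    (hd : ∀ v, d ≤ H.degree v) (hne : Nonempty W) :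
    (d - 1) ^ k + 1 ≤ Fintype.card W := by
  obtain ⟨r⟩ := hne
  set S : ℕ → Finset W := fun i => Finset.univ.filter (fun v => H.edist r v = (i : ℕ∞)) with hS
  have hSmem : ∀ i v, v ∈ S i ↔ H.edist r v = (i : ℕ∞) := by
    intro i v; simp [hS]
  -- f2 : unique parent
  have f2 : ∀ j, j + 1 ≤ k → ∀ w x1 x2, H.edist r w = ((j + 1 : ℕ) : ℕ∞) →
      H.Adj x1 w → H.Adj x2 w → H.edist r x1 = (j : ℕ∞) → H.edist r x2 = (j : ℕ∞) →
      x1 = x2 := by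
    intro j hjk w x1 x2 hw ha1 ha2 hx1 hx2
    obtain ⟨P1, hP1, hP1l⟩ := exists_shortest_path hx1
    obtain ⟨P2, hP2, hP2l⟩ := exists_shortest_path hx2
    have hwP1 : w ∉ P1.support := by
      intro hmem
      have := edist_le_of_mem_support P1 hmem
      rw [hw, hP1l] at this
      have : j + 1 ≤ j := by exact_mod_cast this
      omega
    have hwP2 : w ∉ P2.support := by
      intro hmem
      have := edist_le_of_mem_support P2 hmem
      rw [hw, hP2l] at this
      have : j + 1 ≤ j := by exact_mod_cast this
      omega
    obtain ⟨Q1, hQ1, hQ1l, hQ1s⟩ := exists_path_extend P1 hP1 ha1 hwP1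
    obtain ⟨Q2, hQ2, hQ2l, hQ2s⟩ := exists_path_extend P2 hP2 ha2 hwP2
    have hQeq : Q1 = Q2 :=
      short_paths_unique hg hQ1 hQ2 (by omega) (by omega)
    have hx1mem : x1 ∈ Q2.support := by
      rw [← hQeq]
      rw [hQ1s]
      exact Or.inr P1.end_mem_support
    rw [hQ2s] at hx1mem
    rcases hx1mem with rfl | hx1mem
    · rw [hx1] at hw
      have : j = j + 1 := by exact_mod_cast hw
      omega
    · refine eq_end_of_edist_ge P2 hx1mem ?_
      rw [hP2l, hx1]
  -- f1 : no same-level adjacency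
  have f1 : ∀ i, i + 1 ≤ k → ∀ u w, H.Adj u w → H.edist r u = (i : ℕ∞) →
      H.edist r w = (i : ℕ∞) → False := by
    intro i hik u w ha hu hw
    obtain ⟨P, hP, hPl⟩ := exists_shortest_path hu
    obtain ⟨P', hP', hP'l⟩ := exists_shortest_path hw
    have hwP : w ∉ P.support := by
      intro hmem
      have heq : w = u := by
        refine eq_end_of_edist_ge P hmem ?_
        rw [hPl, hw]
      exact ha.ne heq.symm
    obtain ⟨Q, hQ, hQl, hQs⟩ := exists_path_extend P hP ha hwP
    have hQP' : Q ≠ P' := by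
      intro hcon
      have := congrArg Walk.length hcon
      omega
    obtain ⟨c, cw, hcw, hcwl⟩ := exists_cycle_of_two_paths Q P' hQ hP' hQP'
    have := hg c cw hcw
    omega
  -- neighbor levels
  have hlevels : ∀ u w (i : ℕ), H.Adj u w → H.edist r u = (i : ℕ∞) →
      ∃ j : ℕ, H.edist r w = (j : ℕ∞) ∧ j ≤ i + 1 ∧ i ≤ j + 1 := by
    intro u w i ha hu
    have he1 : H.edist u w = 1 := edist_eq_one_iff_adj.mpr ha
    have h1 : H.edist r w ≤ ((i + 1 : ℕ) : ℕ∞) := by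
      calc H.edist r w ≤ H.edist r u + H.edist u w := SimpleGraph.edist_triangle
        _ = (i : ℕ∞) + 1 := by rw [hu, he1]
        _ = ((i + 1 : ℕ) : ℕ∞) := by push_cast; rfl
    have hne : H.edist r w ≠ ⊤ := by
      intro hcon
      rw [hcon] at h1
      exact (ENat.coe_ne_top _) (top_le_iff.mp h1)
    have hj : ((H.edist r w).toNat : ℕ∞) = H.edist r w := ENat.coe_toNat hne
    set j := (H.edist r w).toNat with hjdef
    refine ⟨j, hj.symm, by rw [← hj] at h1; exact_mod_cast h1, ?_⟩
    have h2 : H.edist r u ≤ H.edist r w + 1 := by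
      calc H.edist r u ≤ H.edist r w + H.edist w u := SimpleGraph.edist_triangle
        _ = H.edist r w + 1 := by rw [edist_comm (u := w) (v := u), he1]
    rw [hu, ← hj] at h2
    have : (i : ℕ∞) ≤ ((j + 1 : ℕ) : ℕ∞) := by
      calc (i : ℕ∞) ≤ (j : ℕ∞) + 1 := h2
        _ = ((j + 1 : ℕ) : ℕ∞) := by push_cast; rfl
    exact_mod_cast this
  -- B2 : level growth
  have B2 : ∀ i, 1 ≤ i → i + 1 ≤ k → (d - 1) * (S i).card ≤ (S (i + 1)).card := by
    intro i hi1 hik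
    set E := ((S i) ×ˢ (S (i + 1))).filter (fun z => H.Adj z.1 z.2) with hE
    have hElow : (d - 1) * (S i).card ≤ E.card := by
      rw [Finset.card_eq_sum_card_fiberwise
        (f := Prod.fst) (t := S i) (by
          intro z hz
          rw [hE, Finset.mem_coe, Finset.mem_filter, Finset.mem_product] at hz
          exact hz.1.1)]
      calc (d - 1) * (S i).card = ∑ _u ∈ S i, (d - 1) := by
            rw [Finset.sum_const, smul_eq_mul, mul_comm]
        _ ≤ _ := ?_
      refine Finset.sum_le_sum ?_
      intro u hu
      rw [hSmem] at hu
      -- neighbors of u at level i+1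
      set Y := (H.neighborFinset u).filter (fun w => H.edist r w = ((i + 1 : ℕ) : ℕ∞)) with hY
      set X := (H.neighborFinset u).filter (fun w => H.edist r w = ((i - 1 : ℕ) : ℕ∞)) with hX
      have hsub : H.neighborFinset u ⊆ X ∪ Y := by
        intro w hw
        rw [H.mem_neighborFinset] at hw
        obtain ⟨j, hj, hj1, hj2⟩ := hlevels u w i hw hu
        have hji : j ≠ i := by
          intro hcon
          exact f1 i hik u w hw hu (hcon ▸ hj)
        rw [Finset.mem_union, hX, hY, Finset.mem_filter, Finset.mem_filter,
          H.mem_neighborFinset]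
        have : j = i - 1 ∨ j = i + 1 := by omega
        rcases this with rfl | rfl
        · exact Or.inl ⟨hw, hj⟩
        · exact Or.inr ⟨hw, hj⟩
      have hX1 : X.card ≤ 1 := by
        rw [Finset.card_le_one]
        intro a ha b hb
        rw [hX, Finset.mem_filter, H.mem_neighborFinset] at ha hb
        have hieq : H.edist r u = (((i - 1) + 1 : ℕ) : ℕ∞) := by
          rwa [show i - 1 + 1 = i by omega]
        exact f2 (i - 1) (by omega) u a b hieq ha.1.symm hb.1.symm ha.2 hb.2
      have hYcard : d - 1 ≤ Y.card := by
        have h1 : d ≤ (H.neighborFinset u).card := hd u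
        have h2 : (H.neighborFinset u).card ≤ X.card + Y.card :=
          le_trans (Finset.card_le_card hsub) (Finset.card_union_le X Y)
        omega
      -- inject Y into the fiber
      calc d - 1 ≤ Y.card := hYcard
        _ ≤ (E.filter (fun z => z.1 = u)).card := ?_
      refine Finset.card_le_card_of_injOn (fun w => (u, w)) ?_ ?_
      · intro w hw
        rw [hY, Finset.mem_coe, Finset.mem_filter, H.mem_neighborFinset] at hw
        rw [Finset.mem_coe, Finset.mem_filter, hE, Finset.mem_filter, Finset.mem_product]
        refine ⟨⟨⟨?_, ?_⟩, hw.1⟩, rfl⟩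
        · rw [hSmem]; exact hu
        · rw [hSmem]; exact_mod_cast hw.2
      · intro a _ b _ hab
        simpa using hab
    have hEhigh : E.card ≤ (S (i + 1)).card := by
      rw [Finset.card_eq_sum_card_fiberwise
        (f := Prod.snd) (t := S (i + 1)) (by
          intro z hz
          rw [hE, Finset.mem_coe, Finset.mem_filter, Finset.mem_product] at hz
          exact hz.1.2)]
      calc ∑ w ∈ S (i + 1), (E.filter (fun z => z.2 = w)).card
          ≤ ∑ _w ∈ S (i + 1), 1 := ?_
        _ = (S (i + 1)).card := by simp
      refine Finset.sum_le_sum ?_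
      intro w hw
      rw [hSmem] at hw
      rw [Finset.card_le_one]
      intro a ha b hb
      rw [Finset.mem_filter, hE, Finset.mem_filter, Finset.mem_product] at ha hb
      obtain ⟨⟨⟨ha1, _⟩, ha3⟩, ha4⟩ := ha
      obtain ⟨⟨⟨hb1, _⟩, hb3⟩, hb4⟩ := hb
      rw [hSmem] at ha1 hb1
      have hw' : H.edist r w = ((i + 1 : ℕ) : ℕ∞) := by exact_mod_cast hw
      have : a.1 = b.1 := by
        refine f2 i hik w a.1 b.1 hw' (ha4 ▸ ha3) (hb4 ▸ hb3) ?_ ?_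
        · exact_mod_cast ha1
        · exact_mod_cast hb1
      have h2 : a.2 = b.2 := by rw [ha4, hb4]
      exact Prod.ext this h2
    omega
  -- growth by induction
  have hgrow : ∀ i, 1 ≤ i → i ≤ k → (d - 1) ^ i ≤ (S i).card := by
    intro i
    induction i with
    | zero => omega
    | succ m ihm =>
      intro _ hik
      rcases Nat.eq_zero_or_pos m with rfl | hm
      · -- base case i = 1
        have hsub : H.neighborFinset r ⊆ S 1 := by
          intro w hw
          rw [H.mem_neighborFinset] at hw
          rw [hSmem]
          have := edist_eq_one_iff_adj.mpr hw
          exact_mod_cast this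
        calc (d - 1) ^ 1 = d - 1 := pow_one _
          _ ≤ H.degree r := le_trans (Nat.sub_le d 1) (hd r)
          _ = (H.neighborFinset r).card := rfl
          _ ≤ (S 1).card := Finset.card_le_card hsub
      · calc (d - 1) ^ (m + 1) = (d - 1) * (d - 1) ^ m := by ring
          _ ≤ (d - 1) * (S m).card :=
            Nat.mul_le_mul_left _ (ihm hm (by omega))
          _ ≤ (S (m + 1)).card := B2 m hm hik
  -- conclude
  have hr0 : r ∈ S 0 := by
    rw [hSmem]
    simp [SimpleGraph.edist_self]
  have hdisj : Disjoint (S k) (S 0) := by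
    rw [Finset.disjoint_left]
    intro v hv hv0
    rw [hSmem] at hv hv0
    rw [hv0] at hv
    have : (0 : ℕ) = k := by exact_mod_cast hv
    omega
  have hcard : (S k).card + (S 0).card ≤ Fintype.card W := by
    rw [← Finset.card_union_of_disjoint hdisj]
    exact le_trans (Finset.card_le_univ _) le_rfl
  have h0 : 1 ≤ (S 0).card := Finset.card_pos.mpr ⟨r, hr0⟩
  have hk' := hgrow k hk le_rfl
  omega

end Moore

lemma edge_count_bound {V : Type*} [Fintype V] [DecidableEq V] (G : SimpleGraph V)
    [DecidableRel G.Adj] (k t : ℕ) (hk : 1 ≤ k)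
    (hg : ∀ (c : V) (w : G.Walk c c), w.IsCycle → 2 * k < w.length)
    (hcard : Fintype.card V ≤ t ^ k) :
    ∀ s : Finset V, (G.edgeFinset.filter (· ∈ s.sym2)).card ≤ t * s.card := by
  intro s
  induction s using Finset.strongInduction with
  | _ s ih =>
  rcases Finset.eq_empty_or_nonempty s with rfl | hs
  · simp
  by_cases hA : ∃ v ∈ s, ((G.neighborFinset v) ∩ s).card ≤ t
  · obtain ⟨v, hv, hdeg⟩ := hA
    set s' := s.erase v with hs'
    have hsub : G.edgeFinset.filter (· ∈ s.sym2) ⊆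
        (G.edgeFinset.filter (· ∈ s'.sym2)) ∪
        ((G.neighborFinset v ∩ s).image (fun w => s(v, w))) := by
      intro e he
      rw [Finset.mem_filter] at he
      obtain ⟨heE, heS⟩ := he
      induction e with
      | h x y =>
        rw [Finset.mk_mem_sym2_iff] at heS
        have hadj : G.Adj x y := by
          rw [SimpleGraph.mem_edgeFinset, SimpleGraph.mem_edgeSet] at heE
          exact heE
        rw [Finset.mem_union]
        by_cases hxv : x = v
        · subst hxv
          refine Or.inr (Finset.mem_image.mpr ⟨y, ?_, rfl⟩)
          rw [Finset.mem_inter, G.mem_neighborFinset]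
          exact ⟨hadj, heS.2⟩
        by_cases hyv : y = v
        · subst hyv
          refine Or.inr (Finset.mem_image.mpr ⟨x, ?_, ?_⟩)
          · rw [Finset.mem_inter, G.mem_neighborFinset]
            exact ⟨hadj.symm, heS.1⟩
          · exact Sym2.eq_swap
        · refine Or.inl ?_
          rw [Finset.mem_filter, Finset.mk_mem_sym2_iff]
          exact ⟨heE, Finset.mem_erase.mpr ⟨hxv, heS.1⟩, Finset.mem_erase.mpr ⟨hyv, heS.2⟩⟩
    have h1 := ih s' (Finset.erase_ssubset hv)
    have h2 : ((G.neighborFinset v ∩ s).image (fun w => s(v, w))).card ≤ t :=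
      le_trans Finset.card_image_le hdeg
    have h3 : s'.card = s.card - 1 := Finset.card_erase_of_mem hv
    have h4 : 1 ≤ s.card := Finset.card_pos.mpr hs
    calc (G.edgeFinset.filter (· ∈ s.sym2)).card
        ≤ ((G.edgeFinset.filter (· ∈ s'.sym2)) ∪
            ((G.neighborFinset v ∩ s).image (fun w => s(v, w)))).card :=
          Finset.card_le_card hsub
      _ ≤ (G.edgeFinset.filter (· ∈ s'.sym2)).card +
            ((G.neighborFinset v ∩ s).image (fun w => s(v, w))).card :=
          Finset.card_union_le _ _
      _ ≤ t * s'.card + t := by omega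
      _ = t * (s'.card + 1) := by ring
      _ = t * s.card := by rw [h3, Nat.sub_add_cancel h4]
  · exfalso
    push_neg at hA
    set H := G.induce (↑s : Set V) with hH
    haveI : DecidableRel H.Adj := Classical.decRel _
    have hgH : ∀ (c : ↥(↑s : Set V)) (w : H.Walk c c), w.IsCycle → 2 * k < w.length := by
      intro c w hw
      let emb : G.induce (↑s : Set V) ↪g G := SimpleGraph.Embedding.induce (↑s : Set V)
      have hinj : Function.Injective emb.toHom := emb.injective
      have hcyc : (w.map emb.toHom).IsCycle :=
        (Walk.map_isCycle_iff_of_injective hinj).mpr hw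
      have := hg _ _ hcyc
      rwa [Walk.length_map] at this
    have hdegH : ∀ v : ↥(↑s : Set V), t + 1 ≤ H.degree v := by
      intro v
      have h1 : t + 1 ≤ (G.neighborFinset ↑v ∩ s).card := hA ↑v v.2
      refine le_trans h1 ?_
      rw [SimpleGraph.degree]
      refine Finset.card_le_card_of_injOn (fun w => if hw : w ∈ s then ⟨w, hw⟩ else v) ?_ ?_
      · intro w hw
        rw [Finset.mem_coe, Finset.mem_inter, G.mem_neighborFinset] at hw
        have hrw : (fun w => if hw : w ∈ s then (⟨w, hw⟩ : ↥(↑s : Set V)) else v) w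
            = ⟨w, hw.2⟩ := dif_pos hw.2
        rw [hrw, Finset.mem_coe, SimpleGraph.mem_neighborFinset]
        exact hw.1
      · intro a ha b hb hab
        rw [Finset.mem_coe, Finset.mem_inter] at ha hb
        rw [show (fun w => if hw : w ∈ s then (⟨w, hw⟩ : ↥(↑s : Set V)) else v) a
            = ⟨a, ha.2⟩ from dif_pos ha.2,
          show (fun w => if hw : w ∈ s then (⟨w, hw⟩ : ↥(↑s : Set V)) else v) b
            = ⟨b, hb.2⟩ from dif_pos hb.2] at hab
        exact congrArg Subtype.val hab
    have hne : Nonempty ↥(↑s : Set V) := ⟨⟨hs.choose, hs.choose_spec⟩⟩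
    have hmb := moore_bound H k (t + 1) hk hgH hdegH hne
    have hcardeq : Fintype.card ↥(↑s : Set V) = s.card := by
      simp [Fintype.card_coe]
    rw [hcardeq] at hmb
    have h5 : s.card ≤ Fintype.card V := Finset.card_le_univ s
    have h6 : t + 1 - 1 = t := by omega
    rw [h6] at hmb
    omega

/-- Size bound for graphs of girth larger than `2k`: such a graph on `n` vertices has
at most `n^{1+1/k} + n` edges. -/
theorem high_girth_size_bound {V : Type*} [Fintype V]
    (k : ℕ) (hk : 1 ≤ k) (G : SimpleGraph V)
    (h : ((2 * k : ℕ) : ℕ∞) < G.egirth) :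
    (G.edgeSet.ncard : ℝ) ≤
      (Fintype.card V : ℝ) ^ ((1 : ℝ) + 1 / (k : ℝ)) + (Fintype.card V : ℝ) := by
  classical
  have hg : ∀ (c : V) (w : G.Walk c c), w.IsCycle → 2 * k < w.length := by
    intro c w hw
    have h1 : G.egirth ≤ w.length := le_egirth.mp le_rfl c w hw
    have h2 := lt_of_lt_of_le h h1
    exact_mod_cast h2
  set n := Fintype.card V with hn
  have hncard : G.edgeSet.ncard = G.edgeFinset.card := by
    rw [Set.ncard_eq_toFinset_card']
    exact congrArg Finset.card (by ext; simp)
  rcases Nat.eq_zero_or_pos n with hn0 | hnpos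
  · haveI : IsEmpty V := Fintype.card_eq_zero_iff.mp hn0
    have hE : G.edgeSet = ∅ := by
      ext e
      induction e with
      | h x y => exact isEmptyElim x
    rw [hE, hn0]
    simp only [Set.ncard_empty, Nat.cast_zero, CharP.cast_eq_zero]
    rw [Real.zero_rpow (by positivity), add_zero]
  · set x := (n : ℝ) ^ ((k : ℝ)⁻¹) with hx
    have hx0 : (0 : ℝ) ≤ x := Real.rpow_nonneg (by positivity) _
    set t := ⌈x⌉₊ with ht
    have hcard : n ≤ t ^ k := by
      have h1 : (n : ℝ) ≤ (t : ℝ) ^ k := by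
        calc (n : ℝ) = ((n : ℝ) ^ ((k : ℝ)⁻¹)) ^ k :=
              (Real.rpow_inv_natCast_pow (by positivity) (by omega)).symm
          _ ≤ (t : ℝ) ^ k := pow_le_pow_left₀ hx0 (Nat.le_ceil x) k
      exact_mod_cast h1
    have hE := edge_count_bound G k t hk hg hcard Finset.univ
    have hfil : G.edgeFinset.filter (· ∈ (Finset.univ : Finset V).sym2) = G.edgeFinset := by
      apply Finset.filter_true_of_mem
      intro e _
      rw [Finset.mem_sym2_iff]
      intro a _
      exact Finset.mem_univ a
    rw [hfil, Finset.card_univ, ← hn] at hE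
    have h2 : (t : ℝ) ≤ x + 1 := le_of_lt (Nat.ceil_lt_add_one hx0)
    have hnR : (0 : ℝ) < n := by exact_mod_cast hnpos
    calc (G.edgeSet.ncard : ℝ) = (G.edgeFinset.card : ℝ) := by rw [hncard]
      _ ≤ (t : ℝ) * n := by exact_mod_cast hE
      _ ≤ (x + 1) * n := mul_le_mul_of_nonneg_right h2 (le_of_lt hnR)
      _ = x * n + n := by ring
      _ = (n : ℝ) ^ ((1 : ℝ) + 1 / (k : ℝ)) + n := by
          rw [Real.rpow_add hnR, Real.rpow_one, one_div, hx]
          ring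
end
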